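/- Let ι: Γ₁ → Γ₂ be a specialization of graphs contracting an edge set 𝓔 ⊆ E(Γ₁), and let (𝓔₁, D₁) be a pseudo-divisor on Γ₁ with pushforward (𝓔₂, D₂) = ι_*(𝓔₁, D₁). Then the cone σ_{(Γ₂,𝓔₂,D₂)} = 𝕋_{𝓔₂}(ℝ^{E(Γ₂^{𝓔₂})}_{≥0}) is a face of the cone σ_{(Γ₁,𝓔₁,D₁)} = 𝕋_{𝓔₁}(ℝ^{E(Γ₁^{𝓔₁})}_{≥0}); specifically it is the intersection of σ_{(Γ₁,𝓔₁,D₁)} with the image of the supporting hyperplane H = {∑ x_{e'} = 0 : e' over some e ∈ 𝓔}, and 𝓛_{𝓔₁} ⊆ H. -/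

import Mathlib

open scoped Classical

/-- A finite multigraph: finite vertex and edge types, with source and target maps
(an orientation is fixed on each edge). -/
structure Multigraph where
  V : Type
  E : Type
  [fintypeV : Fintype V]
  [fintypeE : Fintype E]
  [decEqV : DecidableEq V]
  [decEqE : DecidableEq E]
  s : E → V
  t : E → V

attribute [instance] Multigraph.fintypeV Multigraph.fintypeE
attribute [instance] Multigraph.decEqV Multigraph.decEqE

namespace Multigraph

variable (G : Multigraph)

/-- Adjacency using only edges in `F`. -/
def adjOn (F : Finset G.E) (u v : G.V) : Prop :=
  ∃ e ∈ F, (G.s e = u ∧ G.t e = v) ∨ (G.s e = v ∧ G.t e = u)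

/-- Adjacency in `G`. -/
def adj : G.V → G.V → Prop := G.adjOn Finset.univ

/-- `G` is connected. -/
def Connected : Prop := ∀ u v : G.V, Relation.EqvGen G.adj u v

/-- Number of connected components of the spanning subgraph with edge set `F`. -/
noncomputable def b0 (F : Finset G.E) : ℕ :=
  Nat.card (Quotient (Relation.EqvGen.setoid (G.adjOn F)))

/-- `E(A∖B, B∖A)`: the set of edges connecting `A∖B` to `B∖A`. -/
def crossEdges (A B : Finset G.V) : Finset G.E :=
  Finset.univ.filter fun e =>
    (G.s e ∈ A \ B ∧ G.t e ∈ B \ A) ∨ (G.s e ∈ B \ A ∧ G.t e ∈ A \ B)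

/-- The valence of `v` in the edge set `F` (loops count twice). -/
def valE (F : Finset G.E) (v : G.V) : ℕ :=
  (F.filter fun e => G.s e = v).card + (F.filter fun e => G.t e = v).card

/-- `β_D(S) = deg(D|_S) − μ(S) + δ_{Γ,S}/2`. -/
noncomputable def beta (μ : G.V → ℝ) (D : G.V → ℤ) (S : Finset G.V) : ℝ :=
  (∑ v ∈ S, (D v : ℝ)) - (∑ v ∈ S, μ v) + (G.crossEdges S Sᶜ).card / 2

end Multigraph

/-- A pseudo-divisor `(𝓔, D)` on `G`: a subset `𝓔` of edges and the divisor on the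
subdivision `Γ^𝓔` which takes the value `−1` at each exceptional vertex; it is recorded
by its values `D` on the original vertices. -/
structure PseudoDiv (G : Multigraph) where
  E : Finset G.E
  D : G.V → ℤ

namespace Multigraph

variable (G : Multigraph)

/-- The degree of a pseudo-divisor: `∑ D(v) − |𝓔|` (the exceptional vertices contribute `−1`). -/
def degP (P : PseudoDiv G) : ℤ := (∑ v, P.D v) - P.E.card

/-- `β_{𝓔,D}(S) = deg(D|_S) − μ_𝓔(S) + δ_{Γ_𝓔,S}/2`, where `μ_𝓔(v) = μ(v) + val_𝓔(v)/2`. -/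
noncomputable def betaP (μ : G.V → ℝ) (P : PseudoDiv G) (S : Finset G.V) : ℝ :=
  (∑ v ∈ S, (P.D v : ℝ)) - (∑ v ∈ S, (μ v + (G.valE P.E v : ℝ) / 2))
    + ((G.crossEdges S Sᶜ).filter fun e => e ∉ P.E).card / 2

/-- `(𝓔,D)` is `μ`-semistable. -/
def Semistable (μ : G.V → ℝ) (P : PseudoDiv G) : Prop :=
  ∀ S : Finset G.V, 0 ≤ G.betaP μ P S

/-- `(𝓔,D)` is `μ`-polystable: `β ≥ 0` always, with strict inequality whenever
`E(S,Sᶜ) ⊄ 𝓔`. -/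
def Polystable (μ : G.V → ℝ) (P : PseudoDiv G) : Prop :=
  ∀ S : Finset G.V, 0 ≤ G.betaP μ P S ∧
    (¬ G.crossEdges S Sᶜ ⊆ P.E → 0 < G.betaP μ P S)

/-- `(v₀,μ)`-quasistability for a pseudo-divisor. -/
def Quasistable (v₀ : G.V) (μ : G.V → ℝ) (P : PseudoDiv G) : Prop :=
  ∀ S : Finset G.V, S ≠ Finset.univ →
    (0 ≤ G.betaP μ P S ∧ (v₀ ∈ S → 0 < G.betaP μ P S))

/-- A specialization `P ≥ Q` witnessed by the choice `a`, which assigns to each edge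
`e ∈ P.E ∖ Q.E` the endpoint onto which the exceptional vertex of `e` is contracted. -/
def SpecChoice (P Q : PseudoDiv G) (a : G.E → G.V) : Prop :=
  Q.E ⊆ P.E ∧ (∀ e, a e = G.s e ∨ a e = G.t e) ∧
    ∀ v, Q.D v = P.D v - ((P.E \ Q.E).filter fun e => a e = v).card

/-- The specialization relation on pseudo-divisors: `Spec P Q` means `P ≥ Q`. -/
def Spec (P Q : PseudoDiv G) : Prop := ∃ a, G.SpecChoice P Q a

/-- The rank `rk(𝓔,D) = |𝓔| − b₀(Γ_𝓔) + b₀(Γ)`. -/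
noncomputable def rk (P : PseudoDiv G) : ℤ :=
  (P.E.card : ℤ) - G.b0 P.Eᶜ + G.b0 Finset.univ

end Multigraph

/-- A specialization of graphs `ι : Γ₁ → Γ₂`, contracting the edges in `contr`.
It consists of a surjection on vertices and an identification of `E(Γ₂)` with
`E(Γ₁) ∖ contr`, compatible with endpoints; contracted edges have their endpoints
identified. -/
structure GraphSpec (G₁ G₂ : Multigraph) where
  contr : Finset G₁.E
  ιV : G₁.V → G₂.V
  ιE : G₂.E → G₁.E
  surjV : Function.Surjective ιV
  injE : Function.Injective ιE
  rangeE : ∀ e₁ : G₁.E, (∃ e₂, ιE e₂ = e₁) ↔ e₁ ∉ contr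
  comp_s : ∀ e₂, G₂.s e₂ = ιV (G₁.s (ιE e₂))
  comp_t : ∀ e₂, G₂.t e₂ = ιV (G₁.t (ιE e₂))
  contr_ident : ∀ e ∈ contr, ιV (G₁.s e) = ιV (G₁.t e)

namespace GraphSpec

variable {G₁ G₂ : Multigraph} (σ : GraphSpec G₁ G₂)

/-- The preimage `ι⁻¹(V)` of a subset of vertices. -/
def preV (V : Finset G₂.V) : Finset G₁.V :=
  Finset.univ.filter fun v => σ.ιV v ∈ V

/-- The pushforward polarization `ι_*(μ)`. -/
noncomputable def pushMu (μ : G₁.V → ℝ) : G₂.V → ℝ := fun v' =>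
  ∑ v ∈ Finset.univ.filter (fun v => σ.ιV v = v'), μ v

/-- The pushforward `ι_*(𝓔₁, D₁)` of a pseudo-divisor: `𝓔₂ = 𝓔₁ ∩ E(Γ₂)`, and the
exceptional `−1`'s sitting over contracted edges of `𝓔₁` are absorbed into the image
vertex. -/
noncomputable def pushPD (P : PseudoDiv G₁) : PseudoDiv G₂ where
  E := Finset.univ.filter fun e₂ => σ.ιE e₂ ∈ P.E
  D := fun v' =>
    (∑ v ∈ Finset.univ.filter (fun v => σ.ιV v = v'), P.D v)
      - ((σ.contr ∩ P.E).filter fun e => σ.ιV (G₁.s e) = v').card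

end GraphSpec

namespace Multigraph

variable (G : Multigraph)

/-- The edge set of the subdivision `Γ^𝓔`: one edge for each `e ∉ 𝓔`, and two edges
`e^s` (Boolean `true`, incident to the source) and `e^t` (Boolean `false`, incident to
the target) for each `e ∈ 𝓔`. -/
def EIdx (𝓔 : Finset G.E) : Type :=
  {e : G.E // e ∉ 𝓔} ⊕ ({e : G.E // e ∈ 𝓔} × Bool)

noncomputable instance (𝓔 : Finset G.E) : Fintype (G.EIdx 𝓔) := by
  unfold EIdx; infer_instance

/-- The map `(f_𝓔, g_𝓔) : ℝ^{E(Γ^𝓔)} → ℝ^{E(Γ)} × ℝ^𝓔`: `f_𝓔` sums the coordinates of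
the edges lying over each edge of `Γ`, and `g_𝓔` records the coordinate of `e^s`. -/
noncomputable def Fmap (𝓔 : Finset G.E) (x : G.EIdx 𝓔 → ℝ) :
    (G.E → ℝ) × ({e : G.E // e ∈ 𝓔} → ℝ) :=
  (fun e =>
    if h : e ∈ 𝓔 then x (Sum.inr (⟨e, h⟩, true)) + x (Sum.inr (⟨e, h⟩, false))
    else x (Sum.inl ⟨e, h⟩),
   fun e => x (Sum.inr (e, true)))

/-- The vector `w_V ∈ ℝ^{E(Γ^𝓔)}`: coefficient `+1` at half-edges over `E(V,V^c)`
incident to `V`, `−1` at those incident to `V^c`, and `0` elsewhere. -/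
noncomputable def wVec (𝓔 : Finset G.E) (S : Finset G.V) : G.EIdx 𝓔 → ℝ
  | Sum.inl _ => 0
  | Sum.inr (e, b) =>
      let v := if b then G.s e.1 else G.t e.1
      let w := if b then G.t e.1 else G.s e.1
      if v ∈ S ∧ w ∉ S then 1 else if w ∈ S ∧ v ∉ S then -1 else 0

/-- The subspace `𝓛_𝓔 ⊆ ℝ^{E(Γ^𝓔)}` spanned by the vectors `w_V` over all `V ⊆ V(Γ)`
with `E(V,V^c) ⊆ 𝓔`. -/
noncomputable def LLspace (𝓔 : Finset G.E) : Submodule ℝ (G.EIdx 𝓔 → ℝ) :=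
  Submodule.span ℝ
    {w | ∃ S : Finset G.V, G.crossEdges S Sᶜ ⊆ 𝓔 ∧ w = G.wVec 𝓔 S}

/-- The vector `u_V ∈ ℝ^𝓔`. -/
noncomputable def uVecR (𝓔 : Finset G.E) (S : Finset G.V) :
    {e : G.E // e ∈ 𝓔} → ℝ := fun e =>
  (if G.s e.1 ∈ S ∧ G.t e.1 ∉ S then (1 : ℝ) else 0)
    - (if G.t e.1 ∈ S ∧ G.s e.1 ∉ S then (1 : ℝ) else 0)

/-- The subspace `L_𝓔 ⊆ ℝ^𝓔` spanned by the vectors `u_V` over all `V ⊆ V(Γ)` with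
`E(V,V^c) ⊆ 𝓔`. -/
noncomputable def LspaceR (𝓔 : Finset G.E) : Submodule ℝ ({e : G.E // e ∈ 𝓔} → ℝ) :=
  Submodule.span ℝ
    {u | ∃ S : Finset G.V, G.crossEdges S Sᶜ ⊆ 𝓔 ∧ u = G.uVecR 𝓔 S}

end Multigraph

namespace Multigraph

/-- The edge of `Γ` lying under an edge of the subdivision `Γ^𝓔`. -/
def under (G : Multigraph) (𝓔 : Finset G.E) : G.EIdx 𝓔 → G.E
  | Sum.inl e => e.1
  | Sum.inr (e, _) => e.1

end Multigraph

namespace GraphSpec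

variable {G₁ G₂ : Multigraph} (σ : GraphSpec G₁ G₂)

/-- The pushforward edge set `𝓔₂ = 𝓔₁ ∩ E(Γ₂)`. -/
def pushE (𝓔₁ : Finset G₁.E) : Finset G₂.E :=
  Finset.univ.filter fun e => σ.ιE e ∈ 𝓔₁

/-- The inclusion `E(Γ₂^{𝓔₂}) → E(Γ₁^{𝓔₁})` induced by `ιE`. -/
def jIdx (𝓔₁ : Finset G₁.E) : G₂.EIdx (σ.pushE 𝓔₁) → G₁.EIdx 𝓔₁
  | Sum.inl e => Sum.inl ⟨σ.ιE e.1, fun hc =>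
      e.2 (Finset.mem_filter.mpr ⟨Finset.mem_univ _, hc⟩)⟩
  | Sum.inr (e, b) => Sum.inr (⟨σ.ιE e.1, (Finset.mem_filter.mp e.2).2⟩, b)

/-- Extension by zero `ℝ^{E(Γ₂^{𝓔₂})} → ℝ^{E(Γ₁^{𝓔₁})}` along `jIdx`. -/
noncomputable def jMap (𝓔₁ : Finset G₁.E) (x : G₂.EIdx (σ.pushE 𝓔₁) → ℝ) :
    G₁.EIdx 𝓔₁ → ℝ := fun i =>
  ∑ i₂ : G₂.EIdx (σ.pushE 𝓔₁), if σ.jIdx 𝓔₁ i₂ = i then x i₂ else 0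

end GraphSpec

/-- `F` is a face of the cone `C`: `F ⊆ C` and `F` is cut out of `C` by a supporting
linear functional. -/
def IsFaceOf {M : Type} [AddCommGroup M] [Module ℝ M] (F C : Set M) : Prop :=
  F ⊆ C ∧ ∃ φ : M →ₗ[ℝ] ℝ, (∀ x ∈ C, 0 ≤ φ x) ∧ F = {x ∈ C | φ x = 0}


/-- The linear functional `x ↦ ∑_{i : c i} x i`. -/
noncomputable def sumIfLin {ι : Type} [Fintype ι] (c : ι → Prop) [DecidablePred c] :
    (ι → ℝ) →ₗ[ℝ] ℝ where
  toFun x := ∑ i, if c i then x i else 0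
  map_add' x y := by
    rw [← Finset.sum_add_distrib]
    exact Finset.sum_congr rfl fun i _ => by split <;> simp
  map_smul' r x := by
    simp only [RingHom.id_apply, smul_eq_mul, Finset.mul_sum]
    exact Finset.sum_congr rfl fun i _ => by split <;> simp

lemma sum_inr_bool_ne {α β : Type} (e : β) (b : Bool) :
    (Sum.inr (e, !b) : α ⊕ β × Bool) ≠ Sum.inr (e, b) := by
  cases b <;> simp

@[simp] lemma sumIfLin_apply {ι : Type} [Fintype ι] (c : ι → Prop) [DecidablePred c]
    (x : ι → ℝ) : sumIfLin c x = ∑ i, if c i then x i else 0 := rfl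

/-- for a specialization `ι : Γ₁ → Γ₂` contracting `𝓔 = contr` and a
pseudo-divisor `(𝓔₁,D₁)` on `Γ₁` with pushforward `(𝓔₂,D₂)`, the cone
`σ_{(Γ₂,𝓔₂,D₂)}` is a face of `σ_{(Γ₁,𝓔₁,D₁)}`: the hyperplane
`H = {∑_{e' over e ∈ 𝓔} x_{e'} = 0}` contains `𝓛_{𝓔₁}`, and `σ_{(Γ₂,𝓔₂,D₂)}` equals
the intersection of `σ_{(Γ₁,𝓔₁,D₁)}` with the image of `H`. -/
theorem sigma_face_of_spec (G₁ G₂ : Multigraph) (σ : GraphSpec G₁ G₂)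
    (P : PseudoDiv G₁) :
    -- `𝓛_{𝓔₁} ⊆ H`
    ((G₁.LLspace P.E : Set (G₁.EIdx P.E → ℝ)) ⊆
        {x | (∑ i, if G₁.under P.E i ∈ σ.contr then x i else 0) = 0}) ∧
    -- `σ₂` is the intersection of `σ₁` with the image of `H`
    ((G₁.LLspace P.E).mkQ '' (σ.jMap P.E '' {x | ∀ i, 0 ≤ x i}) =
      ((G₁.LLspace P.E).mkQ '' {x | ∀ i, 0 ≤ x i}) ∩
        ((G₁.LLspace P.E).mkQ ''
          {x | (∑ i, if G₁.under P.E i ∈ σ.contr then x i else 0) = 0})) ∧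
    -- `σ₂` is a face of `σ₁`
    IsFaceOf ((G₁.LLspace P.E).mkQ '' (σ.jMap P.E '' {x | ∀ i, 0 ≤ x i}))
      ((G₁.LLspace P.E).mkQ '' {x | ∀ i, 0 ≤ x i}) := by
  classical
  set c : G₁.EIdx P.E → Prop := fun i => G₁.under P.E i ∈ σ.contr with hc
  set φ : (G₁.EIdx P.E → ℝ) →ₗ[ℝ] ℝ := sumIfLin c with hφdef
  have hφ : ∀ x, φ x = ∑ i, if G₁.under P.E i ∈ σ.contr then x i else 0 := fun x => rfl
  -- the functional vanishes on every generator of 𝓛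
  have hgen : ∀ S : Finset G₁.V, φ (G₁.wVec P.E S) = 0 := by
    intro S
    rw [hφ]
    apply Finset.sum_ninvolution
      (g := fun i : G₁.EIdx P.E => match i with
        | Sum.inl e => Sum.inl e
        | Sum.inr (e, b) => Sum.inr (e, !b))
    · rintro (e | ⟨e, b⟩)
      · simp [Multigraph.wVec]
      · have hpair : ∀ b' : Bool,
            G₁.wVec P.E S (Sum.inr (e, b')) + G₁.wVec P.E S (Sum.inr (e, !b')) = 0 := by
          intro b'
          cases b' <;> simp [Multigraph.wVec] <;> split_ifs <;>
            first | ring1 | (exfalso; simp_all)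
        by_cases hm : (e : G₁.E) ∈ σ.contr
        · simpa [Multigraph.under, hm] using hpair b
        · simp [Multigraph.under, hm]
    · rintro (e | ⟨e, b⟩) h
      · exact absurd (show (if G₁.under P.E (Sum.inl e) ∈ σ.contr
            then G₁.wVec P.E S (Sum.inl e) else 0) = 0 from by simp [Multigraph.wVec]) h
      · exact sum_inr_bool_ne e b
    · intro a; exact Finset.mem_univ _
    · rintro (e | ⟨e, b⟩)
      · rfl
      · simp
        rfl
  have hker : G₁.LLspace P.E ≤ LinearMap.ker φ := by
    rw [Multigraph.LLspace, Submodule.span_le]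
    rintro w ⟨S, -, rfl⟩
    exact LinearMap.mem_ker.mpr (hgen S)
  -- injectivity of jIdx
  have hjinj : Function.Injective (σ.jIdx P.E) := by
    rintro (e | ⟨e, b⟩) (e' | ⟨e', b'⟩) hab
    · exact congrArg Sum.inl (Subtype.ext (σ.injE (congrArg (G₁.under P.E) hab)))
    · exact absurd
        (show true = false from congrArg
          (fun i : G₁.EIdx P.E => match i with | Sum.inl _ => true | Sum.inr _ => false)
          hab) (by decide)
    · exact absurd
        (show false = true from congrArg
          (fun i : G₁.EIdx P.E => match i with | Sum.inl _ => true | Sum.inr _ => false)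
          hab) (by decide)
    · have h1 : σ.ιE e.1 = σ.ιE e'.1 := congrArg (G₁.under P.E) hab
      have h2 : b = b' := congrArg
        (fun i : G₁.EIdx P.E => match i with | Sum.inl _ => true | Sum.inr (_, bb) => bb)
        hab
      cases Subtype.ext (σ.injE h1); cases h2; rfl
  -- jIdx never hits contracted edges
  have hnotc : ∀ i₂, G₁.under P.E (σ.jIdx P.E i₂) ∉ σ.contr := by
    rintro (e | ⟨e, b⟩)
    · exact (σ.rangeE _).mp ⟨e.1, rfl⟩
    · exact (σ.rangeE _).mp ⟨e.1, rfl⟩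
  -- range of jIdx
  have hrange : ∀ i : G₁.EIdx P.E, G₁.under P.E i ∉ σ.contr → ∃ i₂, σ.jIdx P.E i₂ = i := by
    rintro (e | ⟨e, b⟩) hi
    · obtain ⟨e₂, he₂⟩ := (σ.rangeE e.1).mpr hi
      refine ⟨Sum.inl ⟨e₂, fun hm => e.2 (he₂ ▸ (Finset.mem_filter.mp hm).2)⟩, ?_⟩
      exact congrArg Sum.inl (Subtype.ext he₂)
    · obtain ⟨e₂, he₂⟩ := (σ.rangeE e.1).mpr hi
      refine ⟨Sum.inr (⟨e₂, Finset.mem_filter.mpr ⟨Finset.mem_univ _, he₂ ▸ e.2⟩⟩, b), ?_⟩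
      simp only [GraphSpec.jIdx]
      exact congrArg Sum.inr (Prod.ext (Subtype.ext he₂) rfl)
  -- φ vanishes on the image of jMap
  have hjzero : ∀ z, φ (σ.jMap P.E z) = 0 := by
    intro z
    rw [hφ]
    apply Finset.sum_eq_zero
    intro i _
    split
    · next hi =>
      apply Finset.sum_eq_zero
      intro i₂ _
      rw [if_neg]
      intro h
      exact hnotc i₂ (h ▸ hi)
    · rfl
  have hjnonneg : ∀ z : G₂.EIdx (σ.pushE P.E) → ℝ, (∀ i₂, 0 ≤ z i₂) →
      ∀ i, 0 ≤ σ.jMap P.E z i := by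
    intro z hz i
    exact Finset.sum_nonneg fun i₂ _ => by split <;> [exact hz i₂; rfl]
  -- nonnegative vectors killed by φ come from jMap
  have hjsurj : ∀ x : G₁.EIdx P.E → ℝ, (∀ i, 0 ≤ x i) → φ x = 0 →
      ∃ z, (∀ i₂, 0 ≤ z i₂) ∧ σ.jMap P.E z = x := by
    intro x hx hx0
    rw [hφ] at hx0
    have hzero : ∀ i, G₁.under P.E i ∈ σ.contr → x i = 0 := by
      intro i hi
      have h := (Finset.sum_eq_zero_iff_of_nonneg
        (fun j _ => by split <;> [exact hx j; rfl])).mp hx0 i (Finset.mem_univ i)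
      rwa [if_pos hi] at h
    refine ⟨fun i₂ => x (σ.jIdx P.E i₂), fun i₂ => hx _, ?_⟩
    funext i
    by_cases hi : G₁.under P.E i ∈ σ.contr
    · have h1 : σ.jMap P.E (fun i₂ => x (σ.jIdx P.E i₂)) i = 0 :=
        Finset.sum_eq_zero fun i₂ _ => by
          rw [if_neg]; intro h; exact hnotc i₂ (h ▸ hi)
      rw [h1, hzero i hi]
    · obtain ⟨i₀, rfl⟩ := hrange i hi
      show (∑ i₂, if σ.jIdx P.E i₂ = σ.jIdx P.E i₀ then x (σ.jIdx P.E i₂) else 0)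
        = x (σ.jIdx P.E i₀)
      rw [Finset.sum_eq_single i₀]
      · rw [if_pos rfl]
      · intro i₂ _ hne
        rw [if_neg fun h => hne (hjinj h)]
      · intro h; exact absurd (Finset.mem_univ i₀) h
  set φbar : (G₁.EIdx P.E → ℝ) ⧸ G₁.LLspace P.E →ₗ[ℝ] ℝ :=
    (G₁.LLspace P.E).liftQ φ hker with hφbardef
  have hφbar : ∀ x, φbar ((G₁.LLspace P.E).mkQ x) = φ x := fun x => rfl
  -- the main set equality
  have hmain : (G₁.LLspace P.E).mkQ '' (σ.jMap P.E '' {x | ∀ i, 0 ≤ x i}) =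
      {y | y ∈ (G₁.LLspace P.E).mkQ '' {x | ∀ i, 0 ≤ x i} ∧ φbar y = 0} := by
    ext y
    constructor
    · rintro ⟨x, ⟨z, hz, rfl⟩, rfl⟩
      exact ⟨⟨σ.jMap P.E z, fun i => hjnonneg z hz i, rfl⟩, by rw [hφbar]; exact hjzero z⟩
    · rintro ⟨⟨x, hx, rfl⟩, hy0⟩
      rw [hφbar] at hy0
      obtain ⟨z, hz, hzx⟩ := hjsurj x hx hy0
      exact ⟨σ.jMap P.E z, ⟨z, hz, rfl⟩, by rw [hzx]⟩
  refine ⟨?_, ?_, ?_⟩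
  · intro x hx
    have h := LinearMap.mem_ker.mp (hker hx)
    rw [hφ] at h
    exact h
  · rw [hmain]
    ext y
    constructor
    · rintro ⟨hC, hy0⟩
      obtain ⟨x, hx, rfl⟩ := hC
      rw [hφbar] at hy0
      rw [hφ] at hy0
      exact ⟨⟨x, hx, rfl⟩, ⟨x, hy0, rfl⟩⟩
    · rintro ⟨hC, x, hx, rfl⟩
      refine ⟨hC, ?_⟩
      rw [hφbar, hφ]
      exact hx
  · refine ⟨?_, φbar, ?_, ?_⟩
    · rw [hmain]; exact fun y hy => hy.1
    · rintro y ⟨x, hx, rfl⟩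
      rw [hφbar, hφ]
      exact Finset.sum_nonneg fun i _ => by split <;> [exact hx i; rfl]
    · exact hmain
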